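/- Sentence interpolation for ∼FO: let Δ ⊆ ∼FO and α ∈ FO with Δ ⊨ α in team semantics. Then there is a first-order sentence ε (namely the universal closure of α) such that Δ ⊨ ε and ε ⊨ α. -/

import Mathlib

open FirstOrder FirstOrder.Language

/-- Team satisfaction of a classical first-order formula: all assignments of
the team satisfy it. -/
def TeamSatFO (L : Language) (M : Type) [inst : L.Structure M]
    (T : Set (ℕ → M)) (γ : L.Formula ℕ) : Prop :=
  ∀ s ∈ T, γ.Realize s

/-- Team satisfaction of a strongly negated first-order formula ∼δ: the team
does not satisfy δ, i.e., some assignment falsifies δ. -/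
def TeamSatNegFO (L : Language) (M : Type) [inst : L.Structure M]
    (T : Set (ℕ → M)) (δ : L.Formula ℕ) : Prop :=
  ∃ s ∈ T, ¬ δ.Realize s

/-- The universal closure of a formula with free variables in ℕ, as a sentence. -/
noncomputable def univClosure {L : Language} (α : L.Formula ℕ) : L.Sentence :=
  Formula.iAlls (α := Empty) (↑α.freeVarFinset : Set ℕ)
    (α.restrictFreeVar (fun x => Sum.inr (Set.inclusion (Set.Subset.refl (↑α.freeVarFinset : Set ℕ)) x)))

theorem realize_univClosure {L : Language} {M : Type} [L.Structure M] [Nonempty M]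
    (α : L.Formula ℕ) :
    Sentence.Realize (M := M) (univClosure α) ↔ ∀ s : ℕ → M, α.Realize s := by
  rw [Sentence.Realize, univClosure, Formula.realize_iAlls]
  constructor
  · intro h s
    have := h (fun n => s n.1)
    exact (BoundedFormula.realize_restrictFreeVar (φ := α)
      (f := fun x => Sum.inr (Set.inclusion (Set.Subset.refl (↑α.freeVarFinset : Set ℕ)) x))
      (v := fun a => Sum.elim default (fun n : (↑α.freeVarFinset : Set ℕ) => s n.1) a)
      (xs := default) (v' := s) (fun a => rfl)).mp this
  · intro h i
    classical
    set v : ℕ → M := fun n => if hn : n ∈ (↑α.freeVarFinset : Set ℕ) then i ⟨n, hn⟩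
      else Classical.arbitrary M with hv
    exact (BoundedFormula.realize_restrictFreeVar (φ := α)
      (f := fun x => Sum.inr (Set.inclusion (Set.Subset.refl (↑α.freeVarFinset : Set ℕ)) x))
      (v := fun a => Sum.elim default i a)
      (xs := default) (v' := v) (fun a => by simp [hv, a.2])).mpr (h v)

/-- Sentence interpolation: if Δ ⊆ ∼FO entails α ∈ FO in team semantics, then
some first-order sentence ε (namely the universal closure of α) satisfies
Δ ⊨ ε and ε ⊨ α in team semantics. -/
theorem sentence_interpolation (L : Language) (Δ : Set (L.Formula ℕ))
    (α : L.Formula ℕ)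
    (h : ∀ (M : Type) (inst : L.Structure M), Nonempty M →
      ∀ T : Set (ℕ → M),
        (∀ δ ∈ Δ, TeamSatNegFO L M (inst := inst) T δ) →
        TeamSatFO L M (inst := inst) T α) :
    ∃ ε : L.Sentence,
      (∀ (M : Type) (inst : L.Structure M), Nonempty M →
        ∀ T : Set (ℕ → M),
          (∀ δ ∈ Δ, TeamSatNegFO L M (inst := inst) T δ) →
          ∀ s ∈ T, Sentence.Realize (M := M) ε) ∧
      (∀ (M : Type) (inst : L.Structure M), Nonempty M →
        ∀ T : Set (ℕ → M),
          (∀ s ∈ T, Sentence.Realize (M := M) ε) →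
          TeamSatFO L M (inst := inst) T α) := by
  refine ⟨univClosure α, ?_, ?_⟩
  · intro M inst hM T hΔ s _
    have : ∀ δ ∈ Δ, TeamSatNegFO L M (inst := inst) Set.univ δ := by
      intro δ hδ
      obtain ⟨t, _, ht⟩ := hΔ δ hδ
      exact ⟨t, Set.mem_univ t, ht⟩
    have hall := h M inst hM Set.univ this
    haveI : Nonempty M := hM
    exact (realize_univClosure α).mpr (fun v => hall v (Set.mem_univ v))
  · intro M inst hM T hε s hs
    haveI : Nonempty M := hM
    exact (realize_univClosure α).mp (hε s hs) s
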